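/- For every integer n ≥ 4, the 2-adic valuation of 4^n − 4·3^n + 6·2^n − 4 equals 3 if n is even and equals 4 if n is odd. -/

import Mathlib

private lemma nine_pow_aux (j : ℕ) : ∃ S : ℤ, (9:ℤ)^j = 8*S + 1 := by
  induction j with
  | zero => exact ⟨0, by norm_num⟩
  | succ j ih =>
    obtain ⟨S, hS⟩ := ih
    exact ⟨9*S+1, by rw [pow_succ, hS]; ring⟩

private lemma val2_aux (k : ℕ) (A : ℤ) (hA : Odd A) : padicValInt 2 ((2:ℤ)^k * A) = k := by
  haveI : Fact (Nat.Prime 2) := ⟨Nat.prime_two⟩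
  have hmod := Int.odd_iff.mp hA
  have hA0 : A ≠ 0 := by omega
  have hnd : ¬ ((2:ℕ):ℤ) ∣ A := by push_cast; omega
  have hpow : ((2:ℤ))^k = ((2^k : ℕ) : ℤ) := by push_cast; ring
  rw [padicValInt.mul (a := (2:ℤ)^k) (by positivity) hA0,
    padicValInt.eq_zero_of_not_dvd hnd, hpow, padicValInt.of_nat,
    padicValNat.prime_pow, add_zero]

/-- The 2-adic valuation of `4^n - 4·3^n + 6·2^n - 4` (which is `24·S(n,4)` for the
Stirling number of the second kind `S(n,4)`) equals `3` if `n` is even and `4` if `n`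
is odd, for `n ≥ 4`. -/
theorem valuation_stirling_four (n : ℕ) (hn : 4 ≤ n) :
    (Even n → padicValInt 2 ((4 : ℤ) ^ n - 4 * 3 ^ n + 6 * 2 ^ n - 4) = 3) ∧
    (Odd n → padicValInt 2 ((4 : ℤ) ^ n - 4 * 3 ^ n + 6 * 2 ^ n - 4) = 4) := by
  obtain ⟨m, rfl⟩ := Nat.exists_eq_add_of_le hn
  set c : ℤ := 2^m with hc
  have h2 : (2:ℤ)^(4+m) = 16*c := by rw [pow_add]; norm_num [hc]
  have h4 : (4:ℤ)^(4+m) = 256*(c*c) := by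
    have h : (4:ℤ)^m = c*c := by rw [hc, ← mul_pow]; norm_num
    rw [pow_add, h]; norm_num
  have h3 : (3:ℤ)^(4+m) = 81 * 3^m := by rw [pow_add]; norm_num
  constructor
  · intro he
    obtain ⟨r, hr⟩ := he
    obtain ⟨j, rfl⟩ : ∃ j, m = 2*j := ⟨r - 2, by omega⟩
    obtain ⟨S, hS⟩ := nine_pow_aux j
    have ht : (3:ℤ)^(2*j) = 8*S + 1 := by rw [pow_mul]; norm_num [hS]
    have key : (4:ℤ)^(4+2*j) - 4*3^(4+2*j) + 6*2^(4+2*j) - 4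
        = 2^3 * (32*(c*c) + 12*c - 324*S - 41) := by
      rw [h4, h3, h2, ht]; ring
    rw [key, val2_aux]
    exact ⟨16*(c*c) + 6*c - 162*S - 21, by ring⟩
  · intro ho
    obtain ⟨r, hr⟩ := ho
    obtain ⟨j, rfl⟩ : ∃ j, m = 2*j + 1 := ⟨r - 2, by omega⟩
    obtain ⟨S, hS⟩ := nine_pow_aux j
    have ht : (3:ℤ)^(2*j+1) = 24*S + 3 := by
      rw [pow_succ, pow_mul]; norm_num [hS]; ring
    have key : (4:ℤ)^(4+(2*j+1)) - 4*3^(4+(2*j+1)) + 6*2^(4+(2*j+1)) - 4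
        = 2^4 * (16*(c*c) + 6*c - 486*S - 61) := by
      rw [h4, h3, h2, ht]; ring
    rw [key, val2_aux]
    exact ⟨8*(c*c) + 3*c - 243*S - 31, by ring⟩
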